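/- arXiv:1903.10999 — 2 statements merged into one kernel-verified Lean document; each statement's English description precedes it below -/
import Mathlib

section
/- Let R be a discrete valuation ring with uniformizer l. If A and B are finite free R-modules and Γ ⊆ (A ⊗_R B) is an R-submodule of the form Γ = Γ_A ⊗_R Γ_B for full-rank free submodules Γ_A ⊆ A, Γ_B ⊆ B, then for any full-rank free submodule Γ' with Γ ⊆ Γ' ⊆ A ⊗_R B and Γ'/Γ killed by l and nonzero, Γ' cannot itself be of the form Γ'_A ⊗_R Γ'_B with Γ_A ⊆ Γ'_A ⊆ A and Γ_B ⊆ Γ'_B ⊆ B unless Γ'/Γ has length at least min(rank A, rank B). -/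
open TensorProduct

section Aux

variable {R : Type*} [CommRing R]

/-- Chain-building lemma: a family in `N` that is "independent modulo `P`" gives a
strictly increasing chain of submodules of `N ⧸ P.comap N.subtype`. -/
lemma chain_lemma {M : Type*} [AddCommGroup M] [Module R M]
    (N P : Submodule R M) {t : ℕ} (x : Fin t → M) (hx : ∀ j, x j ∈ N)
    (hind : ∀ (k : Fin t) (c : Fin t → R), c k = 0 → x k - ∑ j, c j • x j ∉ P)
    (T : ℕ) (hT : T ≤ t) :
    ∃ s : Fin (T + 1) → Submodule R (N ⧸ P.comap N.subtype), StrictMono s := by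
  classical
  set Q := N ⧸ P.comap N.subtype with hQ
  let y : ℕ → Q := fun j => if h : j < t then Submodule.Quotient.mk ⟨x ⟨j, h⟩, hx _⟩ else 0
  refine ⟨fun k => Submodule.span R (Set.range fun j : Fin (k : ℕ) => y j), ?_⟩
  intro i j hij
  have hijn : (i : ℕ) < (j : ℕ) := hij
  have hjT : (j : ℕ) ≤ T := Nat.lt_succ_iff.mp j.2
  have hit : (i : ℕ) < t := lt_of_lt_of_le (lt_of_lt_of_le hijn hjT) hT
  rw [lt_iff_le_not_ge]
  constructor
  · apply Submodule.span_mono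
    rintro q ⟨jj, rfl⟩
    exact ⟨⟨(jj : ℕ), lt_of_lt_of_le jj.2 (le_of_lt hijn)⟩, rfl⟩
  · intro hle
    have hyi : y (i : ℕ) ∈ Submodule.span R (Set.range fun jj : Fin (j : ℕ) => y jj) :=
      Submodule.subset_span ⟨⟨(i : ℕ), hijn⟩, rfl⟩
    have hmem := hle hyi
    rw [Submodule.mem_span_range_iff_exists_fun R] at hmem
    obtain ⟨c, hc⟩ := hmem
    set C : ℕ → R := fun jj => if h : jj < (i : ℕ) then c ⟨jj, h⟩ else 0 with hC
    have hsum : (∑ jj : Fin t, C jj • y jj) = y (i : ℕ) := by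
      rw [← hc]
      rw [Fin.sum_univ_eq_sum_range (fun jj => C jj • y jj) t]
      rw [← Finset.sum_subset (Finset.range_subset_range.mpr (le_of_lt hit))
        (by
          intro jj _ hjj
          rw [Finset.mem_range] at hjj
          have : C jj = 0 := dif_neg hjj
          rw [this, zero_smul])]
      rw [← Fin.sum_univ_eq_sum_range (fun jj => C jj • y jj) (i : ℕ)]
      refine Finset.sum_congr rfl fun jj _ => ?_
      have : C (jj : ℕ) = c jj := dif_pos jj.2
      rw [this]
    -- translate to a statement about x
    have hy' : ∀ jj : Fin t, y (jj : ℕ) = Submodule.Quotient.mk ⟨x jj, hx jj⟩ := by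
      intro jj
      simp only [y, dif_pos jj.2]
    have hyi' : y (i : ℕ) = Submodule.Quotient.mk ⟨x ⟨(i : ℕ), hit⟩, hx _⟩ := by
      simp only [y, dif_pos hit]
    have hzero : (P.comap N.subtype).mkQ
        ((⟨x ⟨(i : ℕ), hit⟩, hx _⟩ : N) - ∑ jj : Fin t, C (jj : ℕ) • ⟨x jj, hx jj⟩) = 0 := by
      rw [map_sub, map_sum]
      simp only [map_smul, Submodule.mkQ_apply]
      rw [sub_eq_zero, ← hyi', ← hsum]
      exact Finset.sum_congr rfl fun jj _ => by rw [hy' jj]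
    rw [Submodule.mkQ_apply, Submodule.Quotient.mk_eq_zero, Submodule.mem_comap] at hzero
    apply hind ⟨(i : ℕ), hit⟩ (fun jj => C (jj : ℕ)) (dif_neg (lt_irrefl _))
    simpa using hzero

lemma comm_range {A B A' B' : Type*} [AddCommGroup A] [Module R A] [AddCommGroup B] [Module R B]
    [AddCommGroup A'] [Module R A'] [AddCommGroup B'] [Module R B']
    (f : A' →ₗ[R] A) (g : B' →ₗ[R] B) (x : A ⊗[R] B)
    (hx : x ∈ LinearMap.range (TensorProduct.map f g)) :
    TensorProduct.comm R A B x ∈ LinearMap.range (TensorProduct.map g f) := by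
  obtain ⟨t, rfl⟩ := hx
  refine ⟨TensorProduct.comm R A' B' t, ?_⟩
  induction t with
  | zero => simp
  | tmul p q => simp
  | add p q hp hq => simp [map_add, hp, hq]

/-- Core rigidity lemma: with `b` a suitable (Smith normal form) generating family of `ΓB`,
for `v ∉ ΓA` the tensors `v ⊗ (b k - ∑_{j} c j • b j)` (with `c k = 0`) avoid `ΓA ⊗ ΓB`. -/
lemma core [IsDomain R] [IsPrincipalIdealRing R]
    {A B : Type*} [AddCommGroup A] [Module R A] [Module.Free R A]
    [AddCommGroup B] [Module R B] [Module.Free R B] [Module.Finite R B]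
    (ΓA : Submodule R A) (ΓB : Submodule R B) :
    ∃ (t : ℕ) (b : Fin t → B), Module.finrank R ΓB = t ∧ (∀ j, b j ∈ ΓB) ∧
      ∀ v : A, v ∉ ΓA → ∀ (k : Fin t) (c : Fin t → R), c k = 0 →
        v ⊗ₜ[R] (b k - ∑ j, c j • b j) ∉
          LinearMap.range (TensorProduct.map ΓA.subtype ΓB.subtype) := by
  classical
  obtain ⟨t, bM, bN, f, a, hsnf⟩ := ΓB.smithNormalForm (Module.finBasis R B)
  refine ⟨t, fun j => (bN j : B), by simpa using Module.finrank_eq_card_basis bN,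
    fun j => (bN j).2, ?_⟩
  intro v hv k c hck hmem
  set w : B := (bN k : B) - ∑ j, c j • (bN j : B) with hw
  have coordfact : ∀ j, bM.coord (f k) ((bN j : B)) = if j = k then a j else 0 := by
    intro j
    rw [hsnf j, map_smul, Module.Basis.coord_apply, Module.Basis.repr_self, smul_eq_mul,
      Finsupp.single_apply]
    by_cases hjk : j = k
    · subst hjk; simp
    · rw [if_neg hjk, if_neg (fun h => hjk (f.injective h)), mul_zero]
  have hwcoord : bM.coord (f k) w = a k := by
    rw [hw, map_sub, map_sum]
    simp only [map_smul, coordfact, smul_eq_mul, mul_ite, mul_zero]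
    rw [Finset.sum_ite_eq' Finset.univ k (fun j => c j * a j)]
    simp [hck]
  have ha : a k ≠ 0 := by
    intro h0
    apply Module.Basis.ne_zero bN k
    have : (bN k : B) = 0 := by rw [hsnf k, h0, zero_smul]
    exact_mod_cast this
  -- the two functionals
  set ψ : A ⊗[R] B →ₗ[R] A :=
    (TensorProduct.rid R A).toLinearMap ∘ₗ LinearMap.lTensor A (bM.coord (f k)) with hψ
  set Φ'' : ΓA ⊗[R] ΓB →ₗ[R] ΓA :=
    (TensorProduct.rid R ΓA).toLinearMap ∘ₗ LinearMap.lTensor ΓA (bN.coord k) with hΦ''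
  have hcoordsub : ∀ q : ΓB, bM.coord (f k) (q : B) = a k * bN.coord k q := by
    have : (bM.coord (f k)) ∘ₗ ΓB.subtype = a k • (bN.coord k) := by
      refine Module.Basis.ext bN fun j => ?_
      simp only [LinearMap.comp_apply, Submodule.subtype_apply, LinearMap.smul_apply,
        smul_eq_mul, coordfact j, Module.Basis.coord_apply, Module.Basis.repr_self, Finsupp.single_apply]
      by_cases hjk : j = k
      · subst hjk; simp
      · simp [hjk]
    intro q
    have := LinearMap.congr_fun this q
    simpa using this
  have key : ψ ∘ₗ TensorProduct.map ΓA.subtype ΓB.subtype = a k • (ΓA.subtype ∘ₗ Φ'') := by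
    apply TensorProduct.ext'
    intro p q
    simp only [LinearMap.comp_apply, TensorProduct.map_tmul, hψ, hΦ'',
      LinearMap.lTensor_tmul, LinearEquiv.coe_coe, TensorProduct.rid_tmul,
      Submodule.subtype_apply, LinearMap.smul_apply, hcoordsub q]
    rw [mul_smul]
    push_cast
    rfl
  obtain ⟨t₀, ht₀⟩ := hmem
  have h1 : ψ (v ⊗ₜ[R] w) = a k • v := by
    simp [hψ, LinearMap.lTensor_tmul, TensorProduct.rid_tmul, hwcoord]
  have h2 : ψ (v ⊗ₜ[R] w) = a k • ((Φ'' t₀ : ΓA) : A) := by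
    rw [← ht₀, ← LinearMap.comp_apply, key]
    simp
  have hva : v = ((Φ'' t₀ : ΓA) : A) :=
    smul_right_injective A ha (h1.symm.trans h2)
  exact hv (hva ▸ Submodule.coe_mem (Φ'' t₀))

end Aux

/-- Lattice rigidity in a tensor product over a DVR: if `Γ = Γ_A ⊗ Γ_B` is a full-rank
tensor-product lattice in `A ⊗ B`, and `Γ' ⊇ Γ` is a full-rank lattice with `Γ'/Γ`
nonzero and killed by the uniformizer `l`, then `Γ'` can only itself be a tensor product
`Γ'_A ⊗ Γ'_B` (with `Γ_A ⊆ Γ'_A`, `Γ_B ⊆ Γ'_B`) if the length of `Γ'/Γ` is at least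
`min (rank A) (rank B)`, expressed as the existence of a strictly increasing chain of
submodules of that length in `Γ'/Γ`. -/
theorem stmt2 {R : Type*} [CommRing R] [IsDomain R] [IsDiscreteValuationRing R]
    (l : R) (hl : Irreducible l)
    {A B : Type*} [AddCommGroup A] [Module R A] [Module.Free R A] [Module.Finite R A]
    [AddCommGroup B] [Module R B] [Module.Free R B] [Module.Finite R B]
    (ΓA : Submodule R A) (ΓB : Submodule R B)
    (hΓA : Module.finrank R ΓA = Module.finrank R A)
    (hΓB : Module.finrank R ΓB = Module.finrank R B)
    (Γ' : Submodule R (A ⊗[R] B))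
    (hle : LinearMap.range (TensorProduct.map ΓA.subtype ΓB.subtype) ≤ Γ')
    (hΓ' : Module.finrank R Γ' = Module.finrank R (A ⊗[R] B))
    (hkill : ∀ x ∈ Γ', l • x ∈ LinearMap.range (TensorProduct.map ΓA.subtype ΓB.subtype))
    (hne : LinearMap.range (TensorProduct.map ΓA.subtype ΓB.subtype) ≠ Γ')
    (Γ'A : Submodule R A) (Γ'B : Submodule R B)
    (hAA : ΓA ≤ Γ'A) (hBB : ΓB ≤ Γ'B)
    (htens : Γ' = LinearMap.range (TensorProduct.map Γ'A.subtype Γ'B.subtype)) :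
    ∃ s : Fin (min (Module.finrank R A) (Module.finrank R B) + 1) →
      Submodule R (Γ' ⧸ (LinearMap.range
        (TensorProduct.map ΓA.subtype ΓB.subtype)).comap Γ'.subtype),
      StrictMono s := by
  classical
  set Γ := LinearMap.range (TensorProduct.map ΓA.subtype ΓB.subtype) with hΓ
  set T := min (Module.finrank R A) (Module.finrank R B) with hTdef
  have hcase : ΓA ≠ Γ'A ∨ ΓB ≠ Γ'B := by
    by_contra h
    push_neg at h
    exact hne (by rw [htens, ← h.1, ← h.2])
  rcases hcase with hAne | hBne
  · obtain ⟨v, hvA', hvA⟩ := SetLike.exists_of_lt (lt_of_le_of_ne hAA hAne)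
    obtain ⟨t, b, hbt, hbΓ, hcore⟩ := core ΓA ΓB
    have hT : T ≤ t := by
      rw [← hbt, hΓB, hTdef]
      exact min_le_right _ _
    refine chain_lemma Γ' Γ (fun j => v ⊗ₜ[R] b j) (fun j => ?_) ?_ T hT
    · rw [htens]
      exact ⟨⟨v, hvA'⟩ ⊗ₜ[R] ⟨b j, hBB (hbΓ j)⟩, by simp⟩
    · intro k c hck hmemP
      apply hcore v hvA k c hck
      have : v ⊗ₜ[R] (b k - ∑ j, c j • b j) =
          v ⊗ₜ[R] b k - ∑ j, c j • (v ⊗ₜ[R] b j) := by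
        simp [TensorProduct.tmul_sub, TensorProduct.tmul_sum, TensorProduct.tmul_smul]
      rw [this]
      exact hmemP
  · obtain ⟨v, hvB', hvB⟩ := SetLike.exists_of_lt (lt_of_le_of_ne hBB hBne)
    obtain ⟨t, b, hbt, hbΓ, hcore⟩ := core ΓB ΓA
    have hT : T ≤ t := by
      rw [← hbt, hΓA, hTdef]
      exact min_le_left _ _
    refine chain_lemma Γ' Γ (fun j => b j ⊗ₜ[R] v) (fun j => ?_) ?_ T hT
    · rw [htens]
      exact ⟨⟨b j, hAA (hbΓ j)⟩ ⊗ₜ[R] ⟨v, hvB'⟩, by simp⟩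
    · intro k c hck hmemP
      apply hcore v hvB k c hck
      have heq : (b k - ∑ j, c j • b j) ⊗ₜ[R] v =
          b k ⊗ₜ[R] v - ∑ j, c j • (b j ⊗ₜ[R] v) := by
        simp [TensorProduct.sub_tmul, TensorProduct.sum_tmul, TensorProduct.smul_tmul']
      have hmem2 : (b k - ∑ j, c j • b j) ⊗ₜ[R] v ∈ Γ := by rw [heq]; exact hmemP
      have := comm_range ΓA.subtype ΓB.subtype _ hmem2
      simpa using this
end

section
/- Let R be a discrete valuation ring and f : A → B a morphism of finite free R-modules. Then coker(f) is torsion-free if and only if f ⊗ id_k : A ⊗ k → B ⊗ k and f ⊗ id_K : A ⊗ K → B ⊗ K have kernels of the same dimension, where k is the residue field and K the fraction field. -/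
open TensorProduct

/-- The span of a family `c i • b (g i)` (with `b` a basis, `g` injective) has
dimension the number of nonzero scalars `c i`. -/
lemma aux_finrank_span_smul {F V ι : Type*} [Field F] [AddCommGroup V] [Module F V]
    {n : ℕ} (b : Module.Basis ι F V) (g : Fin n ↪ ι) (c : Fin n → F)
    [DecidablePred fun i => c i ≠ 0] :
    Module.finrank F (Submodule.span F (Set.range fun i => c i • b (g i))) =
      Fintype.card {i // c i ≠ 0} := by
  have hspan : Submodule.span F (Set.range fun i => c i • b (g i)) =
      Submodule.span F (Set.range fun i : {i // c i ≠ 0} => c i.1 • b (g i.1)) := by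
    apply le_antisymm
    · rw [Submodule.span_le]
      rintro - ⟨i, rfl⟩
      by_cases hc : c i = 0
      · simp [hc]
      · exact Submodule.subset_span ⟨⟨i, hc⟩, rfl⟩
    · rw [Submodule.span_le]
      rintro - ⟨i, rfl⟩
      exact Submodule.subset_span ⟨i.1, rfl⟩
  rw [hspan]
  refine finrank_span_eq_card ?_
  have hb : LinearIndependent F (fun i : {i // c i ≠ 0} => b (g i.1)) :=
    b.linearIndependent.comp _ (g.injective.comp Subtype.val_injective)
  have h := hb.units_smul (fun i => Units.mk0 (c i.1) i.2)
  convert h using 1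
  exact funext fun i => rfl

/-- The range of a base-changed map is the span of the image of the range. -/
lemma aux_range_baseChange {R S A B : Type*} [CommRing R] [CommRing S] [Algebra R S]
    [AddCommGroup A] [Module R A] [AddCommGroup B] [Module R B] (f : A →ₗ[R] B) :
    LinearMap.range (f.baseChange S) =
      Submodule.span S (TensorProduct.mk R S B 1 '' (LinearMap.range f : Set B)) := by
  apply le_antisymm
  · rintro - ⟨x, rfl⟩
    induction x using TensorProduct.induction_on with
    | zero => simp
    | tmul s a =>
        rw [LinearMap.baseChange_tmul]
        have hsa : s ⊗ₜ[R] f a = s • ((1 : S) ⊗ₜ[R] f a) := by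
          rw [smul_tmul', smul_eq_mul, mul_one]
        rw [hsa]
        exact Submodule.smul_mem _ _
          (Submodule.subset_span ⟨f a, ⟨a, rfl⟩, rfl⟩)
    | add x y hx hy =>
        rw [map_add]
        exact Submodule.add_mem _ hx hy
  · rw [Submodule.span_le]
    rintro - ⟨-, ⟨a, rfl⟩, rfl⟩
    exact ⟨(1 : S) ⊗ₜ a, by simp⟩

/-- Rank–nullity computation for the base change of `f` to a field `S`, in terms of a
Smith-normal-form description of the range of `f`. -/
lemma aux_key {R A B : Type*} [CommRing R] [StrongRankCondition R]
    [AddCommGroup A] [Module R A] [Module.Free R A] [Module.Finite R A]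
    [AddCommGroup B] [Module R B] (f : A →ₗ[R] B)
    {ι : Type*} {n : ℕ} (bM : Module.Basis ι R B) (g : Fin n ↪ ι) (a : Fin n → R)
    (hN : LinearMap.range f = Submodule.span R (Set.range fun i => a i • bM (g i)))
    (S : Type*) [Field S] [Algebra R S]
    [DecidablePred fun i => algebraMap R S (a i) ≠ 0] :
    Module.finrank S (LinearMap.ker (f.baseChange S)) +
      Fintype.card {i // algebraMap R S (a i) ≠ 0} = Module.finrank R A := by
  have h1 : LinearMap.range (f.baseChange S) =
      Submodule.span S
        (Set.range fun i => algebraMap R S (a i) • (bM.baseChange S) (g i)) := by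
    rw [aux_range_baseChange, hN]
    have h2 : Submodule.span S
        (TensorProduct.mk R S B 1 ''
          ((Submodule.span R (Set.range fun i => a i • bM (g i)) : Submodule R B) : Set B)) =
        (Submodule.span R (Set.range fun i => a i • bM (g i))).baseChange S := by
      rw [Submodule.baseChange_eq_span, Submodule.map_coe]
    rw [h2, Submodule.baseChange_span]
    congr 1
    rw [← Set.range_comp]
    refine congrArg Set.range (funext fun i => ?_)
    simp only [Function.comp_apply, TensorProduct.mk_apply, tmul_smul,
      Module.Basis.baseChange_apply, algebraMap_smul]
  have hrank := LinearMap.finrank_range_add_finrank_ker (f.baseChange S)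
  rw [h1, aux_finrank_span_smul (bM.baseChange S) g _,
    Module.finrank_baseChange] at hrank
  omega

/-- Strictness criterion over a DVR: for a map `f : A → B` of finite free `R`-modules,
`coker f` is torsion-free iff the kernels of `f ⊗ k` and `f ⊗ K` have the same
dimension, where `k` is the residue field and `K` the fraction field. -/
theorem stmt4 {R : Type*} [CommRing R] [IsDomain R] [IsDiscreteValuationRing R]
    {A B : Type*} [AddCommGroup A] [Module R A] [Module.Free R A] [Module.Finite R A]
    [AddCommGroup B] [Module R B] [Module.Free R B] [Module.Finite R B]
    (f : A →ₗ[R] B) :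
    NoZeroSMulDivisors R (B ⧸ LinearMap.range f) ↔
      Module.finrank (IsLocalRing.ResidueField R)
          (LinearMap.ker (LinearMap.baseChange (IsLocalRing.ResidueField R) f)) =
        Module.finrank (FractionRing R)
          (LinearMap.ker (LinearMap.baseChange (FractionRing R) f)) := by
  classical
  obtain ⟨n, snf⟩ := (LinearMap.range f).smithNormalForm (Module.Free.chooseBasis R B)
  -- the diagonal entries are nonzero
  have ha : ∀ i, snf.a i ≠ 0 := by
    intro i h
    have h2 := snf.snf i
    rw [h, zero_smul] at h2
    exact snf.bN.ne_zero i (Subtype.coe_injective h2)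
  -- the range of `f` is the span of the `a i • bM (f i)`
  have hN : LinearMap.range f =
      Submodule.span R (Set.range fun i => snf.a i • snf.bM (snf.f i)) := by
    conv_lhs => rw [← Submodule.map_subtype_top (LinearMap.range f), ← snf.bN.span_eq,
      Submodule.map_span]
    congr 1
    rw [← Set.range_comp]
    exact congrArg _ (funext fun i => snf.snf i)
  have hk := aux_key f snf.bM snf.f snf.a hN (IsLocalRing.ResidueField R)
  have hK := aux_key f snf.bM snf.f snf.a hN (FractionRing R)
  have hcardK : Fintype.card {i // algebraMap R (FractionRing R) (snf.a i) ≠ 0} = n := by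
    have hall : ∀ i, algebraMap R (FractionRing R) (snf.a i) ≠ 0 := fun i h =>
      ha i (IsFractionRing.injective R (FractionRing R) (by simpa using h))
    rw [Fintype.card_congr (Equiv.subtypeUnivEquiv hall), Fintype.card_fin]
  have hcardk : Fintype.card {i // algebraMap R (IsLocalRing.ResidueField R) (snf.a i) ≠ 0}
      = Fintype.card {i // IsUnit (snf.a i)} := by
    refine Fintype.card_congr (Equiv.subtypeEquivRight fun i => ?_)
    rw [IsLocalRing.ResidueField.algebraMap_eq]
    simp [IsLocalRing.residue_eq_zero_iff, IsLocalRing.mem_maximalIdeal, mem_nonunits_iff]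
  rw [hcardK] at hK
  rw [hcardk] at hk
  constructor
  · intro h
    have hu : ∀ i, IsUnit (snf.a i) := by
      intro i
      by_contra hi
      have hmem : snf.a i •
          Submodule.Quotient.mk (p := LinearMap.range f) (snf.bM (snf.f i)) = 0 := by
        rw [← Submodule.Quotient.mk_smul, Submodule.Quotient.mk_eq_zero, ← snf.snf i]
        exact (snf.bN i).2
      rcases eq_zero_or_eq_zero_of_smul_eq_zero hmem with h0 | h0
      · exact ha i h0
      · rw [Submodule.Quotient.mk_eq_zero] at h0
        have hrep := snf.repr_apply_embedding_eq_repr_smul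
          (m := ⟨snf.bM (snf.f i), h0⟩) (i := i)
        rw [Module.Basis.repr_self, Finsupp.single_eq_same, map_smul, Finsupp.smul_apply,
          smul_eq_mul] at hrep
        exact hi (IsUnit.of_mul_eq_one _ hrep.symm)
    have hcard : Fintype.card {i // IsUnit (snf.a i)} = n := by
      rw [Fintype.card_congr (Equiv.subtypeUnivEquiv hu), Fintype.card_fin]
    omega
  · intro h
    have hcard : Fintype.card {i // IsUnit (snf.a i)} = n := by omega
    have hu : ∀ i, IsUnit (snf.a i) := by
      intro i
      by_contra hi
      have hlt : Fintype.card {i // IsUnit (snf.a i)} < n := by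
        simpa using Fintype.card_subtype_lt (p := fun j => IsUnit (snf.a j)) (x := i) hi
      omega
    -- the range of `f` is the span of a subset of a basis
    have hspan2 : LinearMap.range f =
        Submodule.span R (snf.bM '' Set.range snf.f) := by
      conv_lhs => rw [hN]
      apply le_antisymm
      · rw [Submodule.span_le]
        rintro - ⟨i, rfl⟩
        exact Submodule.smul_mem _ _
          (Submodule.subset_span ⟨snf.f i, ⟨i, rfl⟩, rfl⟩)
      · rw [Submodule.span_le]
        rintro - ⟨-, ⟨i, rfl⟩, rfl⟩
        obtain ⟨u, hu'⟩ := hu i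
        have heq : snf.bM (snf.f i) = (↑u⁻¹ : R) • (snf.a i • snf.bM (snf.f i)) := by
          rw [smul_smul, ← hu', Units.inv_mul, one_smul]
        rw [heq]
        exact Submodule.smul_mem _ _ (Submodule.subset_span ⟨i, rfl⟩)
    refine ⟨fun {c x} hcx => ?_⟩
    by_cases hc : c = 0
    · exact Or.inl hc
    right
    obtain ⟨y, rfl⟩ := Submodule.Quotient.mk_surjective _ x
    rw [← Submodule.Quotient.mk_smul, Submodule.Quotient.mk_eq_zero] at hcx
    rw [Submodule.Quotient.mk_eq_zero]
    rw [hspan2, Module.Basis.mem_span_image] at hcx ⊢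
    rwa [map_smul, Finsupp.support_smul_eq hc] at hcx
end
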